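/- Let G be a finite connected simple undirected graph with minimum degree at least k+1 for an integer k ≥ 186, let T be a spanning tree of G, and let H be a spanning subgraph of G containing T in which every vertex has degree at least min(deg_G(v), k). Then leaf(H) ≥ (1 − 30·(1 + ln(k+1))/(k+1)) · leaf(G), where leaf(·) denotes the maximum number of leaves over all spanning trees. -/

import Mathlib

/-- `maxLeaf G` is the maximum number of leaves (degree-one vertices) over all
spanning trees of `G`. -/
noncomputable def maxLeaf {V : Type*} (G : SimpleGraph V) : ℕ :=
  sSup {c | ∃ T : SimpleGraph V, T ≤ G ∧ T.IsTree ∧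
    {v | (T.neighborSet v).ncard = 1}.ncard = c}

section aux

open SimpleGraph

variable {V : Type*}


open SimpleGraph


lemma aux_acyclic_sup_edge {G : SimpleGraph V} (hG : G.IsAcyclic) {a b : V} (hab : a ≠ b)
    (hr : ¬ G.Reachable a b) : (G ⊔ SimpleGraph.fromEdgeSet {s(a, b)}).IsAcyclic := by
  intro v c hc
  by_cases he : s(a, b) ∈ c.edges
  · have h2 : (G ⊔ fromEdgeSet {s(a, b)}).Adj a b ∧
      ((G ⊔ fromEdgeSet {s(a, b)}) \ fromEdgeSet {s(a, b)}).Reachable a b :=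
      (adj_and_reachable_delete_edges_iff_exists_cycle).mpr ⟨v, c, hc, he⟩
    refine hr (h2.2.mono ?_)
    rw [sup_sdiff_right_self]
    exact sdiff_le
  · have hsub : ∀ e ∈ c.edges, e ∈ G.edgeSet := by
      intro e hec
      have := c.edges_subset_edgeSet hec
      rw [edgeSet_sup, edgeSet_fromEdgeSet] at this
      rcases this with h | h
      · exact h
      · exfalso
        rcases h with ⟨h1, _⟩
        rw [Set.mem_singleton_iff] at h1
        exact he (h1 ▸ hec)
    exact hG (c.transfer G hsub) (hc.transfer hsub)

lemma aux_exists_tree_between [Fintype V] {F H : SimpleGraph V} (hFH : F ≤ H)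
    (hF : F.IsAcyclic) (hH : H.Connected) : ∃ F', F ≤ F' ∧ F' ≤ H ∧ F'.IsTree := by
  classical
  obtain ⟨F', hmem, hmax⟩ := Set.Finite.exists_maximalFor id
    {A : SimpleGraph V | F ≤ A ∧ A ≤ H ∧ A.IsAcyclic} (Set.toFinite _)
    ⟨F, le_refl _, hFH, hF⟩
  obtain ⟨hFF', hF'H, hF'ac⟩ := hmem
  have hadjreach : ∀ a b : V, H.Adj a b → F'.Reachable a b := by
    intro a b hab
    by_contra hn
    have hne : a ≠ b := hab.ne
    have hF''ac : (F' ⊔ fromEdgeSet {s(a, b)}).IsAcyclic := aux_acyclic_sup_edge hF'ac hne hn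
    have hF''H : (F' ⊔ fromEdgeSet {s(a, b)}) ≤ H := by
      refine sup_le hF'H ?_
      intro x y hxy
      rw [fromEdgeSet_adj, Set.mem_singleton_iff] at hxy
      obtain ⟨h1, _⟩ := hxy
      rw [Sym2.eq_iff] at h1
      rcases h1 with ⟨rfl, rfl⟩ | ⟨rfl, rfl⟩
      · exact hab
      · exact hab.symm
    have heq := hmax (j := F' ⊔ fromEdgeSet {s(a, b)})
      ⟨le_trans hFF' le_sup_left, hF''H, hF''ac⟩ le_sup_left
    simp only [id] at heq
    have : (F' ⊔ fromEdgeSet {s(a, b)}).Adj a b :=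
      Or.inr (by rw [fromEdgeSet_adj]; exact ⟨rfl, hne⟩)
    replace this := heq this
    exact hn this.reachable
  have hpre : F'.Preconnected := by
    intro u v
    obtain ⟨p⟩ := hH.preconnected u v
    induction p with
    | nil => exact Reachable.refl _
    | cons h p ih => exact (hadjreach _ _ h).trans ih
  have : Nonempty V := hH.nonempty
  exact ⟨F', hFF', hF'H, ⟨(SimpleGraph.connected_iff F').mpr ⟨hpre, this⟩, hF'ac⟩⟩

open Finset in
lemma aux_tree_leaves [Fintype V] (H : SimpleGraph V) (hH : H.Connected) (D : Finset V)
    (hDne : D.Nonempty) (hdom : ∀ v : V, v ∉ D → ∃ w ∈ D, H.Adj v w) :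
    ∃ Tr : SimpleGraph V, Tr ≤ H ∧ Tr.IsTree ∧
      ((Fintype.card V : ℝ) - 3 * D.card + 2
        ≤ ({v | (Tr.neighborSet v).ncard = 1}.ncard : ℝ)) := by
  classical
  set n := Fintype.card V with hn
  -- the domination function
  have hdfun0 : ∀ v : V, ∃ w : V, v ∉ D → (w ∈ D ∧ H.Adj v w) := by
    intro v
    by_cases hv : v ∈ D
    · exact ⟨v, fun h => absurd hv h⟩
    · obtain ⟨w, hw1, hw2⟩ := hdom v hv
      exact ⟨w, fun _ => ⟨hw1, hw2⟩⟩
  choose dfun hdfun using hdfun0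
  -- the star forest
  set F : SimpleGraph V := SimpleGraph.fromRel (fun a b => a ∉ D ∧ b = dfun a) with hF
  have hFadj : ∀ a : V, a ∉ D → F.Adj a (dfun a) := by
    intro a ha
    rw [hF, fromRel_adj]
    refine ⟨?_, Or.inl ⟨ha, rfl⟩⟩
    intro heq
    exact ha (heq ▸ (hdfun a ha).1)
  have huniq : ∀ a : V, a ∉ D → ∀ w : V, F.Adj a w → w = dfun a := by
    intro a ha w hw
    rw [hF, fromRel_adj] at hw
    rcases hw.2 with ⟨_, rfl⟩ | ⟨hw1, hw2⟩
    · rfl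
    · exact absurd ((hw2 ▸ (hdfun w hw1).1)) ha
  have hFH : F ≤ H := by
    intro a b hab
    rw [hF, fromRel_adj] at hab
    rcases hab.2 with ⟨h1, rfl⟩ | ⟨h1, rfl⟩
    · exact (hdfun a h1).2
    · exact (hdfun b h1).2.symm
  -- F is acyclic
  have hbridge : ∀ a : V, a ∉ D → F.IsBridge s(a, dfun a) := by
    intro a ha
    rw [SimpleGraph.isBridge_iff_adj_and_forall_walk_mem_edges]
    intro p
    have hne : a ≠ dfun a := (hFadj a ha).ne
    obtain ⟨w, hadj, q, rfl⟩ := SimpleGraph.Walk.exists_eq_cons_of_ne hne p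
    have : w = dfun a := huniq a ha w hadj
    subst this
    simp
  have hFac : F.IsAcyclic := by
    rw [SimpleGraph.isAcyclic_iff_forall_adj_isBridge]
    intro x y hxy
    have hxy' := hxy
    rw [hF, fromRel_adj] at hxy'
    rcases hxy'.2 with ⟨h1, rfl⟩ | ⟨h1, rfl⟩
    · exact hbridge x h1
    · rw [Sym2.eq_swap]
      exact hbridge y h1
  -- extend to a spanning tree
  obtain ⟨Tr, hFTr, hTrH, hTrTree⟩ := aux_exists_tree_between hFH hFac hH
  refine ⟨Tr, hTrH, hTrTree, ?_⟩
  -- edge counts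
  have hFcard : F.edgeFinset.card = (Finset.univ \ D).card := by
    symm
    refine Finset.card_nbij (fun v => s(v, dfun v)) ?_ ?_ ?_
    · intro a hamem
      rw [Finset.mem_coe, Finset.mem_sdiff] at hamem
      rw [Finset.mem_coe, SimpleGraph.mem_edgeFinset, SimpleGraph.mem_edgeSet]
      exact hFadj a hamem.2
    · intro a hamem b hbmem heq
      simp only [Finset.coe_sdiff, Set.mem_diff, Finset.coe_univ, Finset.mem_coe] at hamem hbmem
      rw [Sym2.eq_iff] at heq
      rcases heq with ⟨rfl, _⟩ | ⟨h1, h2⟩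
      · rfl
      · exfalso
        have : dfun a ∈ D := (hdfun a hamem.2).1
        rw [h2] at this
        exact hbmem.2 this
    · intro e hemem
      simp only [Finset.coe_sdiff, Finset.coe_univ, Set.mem_image]
      rw [Finset.mem_coe, SimpleGraph.mem_edgeFinset] at hemem
      induction e with
      | h x y =>
        rw [SimpleGraph.mem_edgeSet, hF, fromRel_adj] at hemem
        rcases hemem.2 with ⟨h1, rfl⟩ | ⟨h1, rfl⟩
        · exact ⟨x, ⟨Set.mem_univ x, h1⟩, rfl⟩
        · exact ⟨y, ⟨Set.mem_univ y, h1⟩, Sym2.eq_swap⟩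
  have hTrcard : Tr.edgeFinset.card + 1 = n := hTrTree.card_edgeFinset
  have hsubE : F.edgeFinset ⊆ Tr.edgeFinset := by
    rw [SimpleGraph.edgeFinset_subset_edgeFinset]
    exact hFTr
  set extra : Finset (Sym2 V) := Tr.edgeFinset \ F.edgeFinset with hextra
  have hDcard_le : D.card ≤ n := Finset.card_le_univ D
  have hDpos : 1 ≤ D.card := Finset.card_pos.mpr hDne
  have hunivD : (Finset.univ \ D).card = n - D.card := by
    rw [Finset.card_sdiff_of_subset (Finset.subset_univ D), Finset.card_univ]
  have hextracard : extra.card = D.card - 1 := by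
    rw [hextra, Finset.card_sdiff_of_subset hsubE, hFcard, hunivD]
    omega
  -- endpoints of extra edges
  set ep : Sym2 V → Finset V := fun e => Finset.univ.filter (· ∈ e) with hep
  have hepcard : ∀ e : Sym2 V, (ep e).card ≤ 2 := by
    intro e
    induction e with
    | h x y =>
      have hsub : ep s(x, y) ⊆ {x, y} := by
        intro z hz
        rw [hep] at hz
        simp only [Finset.mem_filter, Sym2.mem_iff] at hz
        simp only [Finset.mem_insert, Finset.mem_singleton]
        exact hz.2
      calc (ep s(x, y)).card ≤ ({x, y} : Finset V).card := Finset.card_le_card hsub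
        _ ≤ 2 := by
            apply (Finset.card_insert_le x {y}).trans
            simp
  -- the bad set
  set B : Finset V := D ∪ extra.biUnion ep with hB
  have hBcard : B.card ≤ D.card + 2 * extra.card := by
    calc B.card ≤ D.card + (extra.biUnion ep).card := Finset.card_union_le _ _
      _ ≤ D.card + ∑ e ∈ extra, (ep e).card := by
          gcongr
          exact Finset.card_biUnion_le
      _ ≤ D.card + ∑ _e ∈ extra, 2 := by
          gcongr with e he
          exact hepcard e
      _ = D.card + 2 * extra.card := by rw [Finset.sum_const, smul_eq_mul, mul_comm]
  -- good vertices are leaves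
  have hgood : ∀ v : V, v ∉ B → Tr.neighborSet v = {dfun v} := by
    intro v hv
    have hvD : v ∉ D := fun h => hv (Finset.mem_union_left _ h)
    have hvext : v ∉ extra.biUnion ep := fun h => hv (Finset.mem_union_right _ h)
    ext u
    simp only [SimpleGraph.mem_neighborSet, Set.mem_singleton_iff]
    constructor
    · intro hadj
      have hedge : s(v, u) ∈ Tr.edgeFinset := by
        rw [SimpleGraph.mem_edgeFinset, SimpleGraph.mem_edgeSet]
        exact hadj
      by_cases hFe : s(v, u) ∈ F.edgeFinset
      · rw [SimpleGraph.mem_edgeFinset, SimpleGraph.mem_edgeSet] at hFe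
        exact huniq v hvD u hFe
      · exfalso
        apply hvext
        rw [Finset.mem_biUnion]
        refine ⟨s(v, u), ?_, ?_⟩
        · rw [hextra, Finset.mem_sdiff]
          exact ⟨hedge, hFe⟩
        · rw [hep]
          simp
    · rintro rfl
      exact hFTr (hFadj v hvD)
  -- count the leaves
  have hleafset : ({v | (Tr.neighborSet v).ncard = 1}).ncard
      = (Finset.univ.filter (fun v => (Tr.neighborSet v).ncard = 1)).card := by
    rw [Set.ncard_eq_toFinset_card']
    congr 1
    ext v
    simp
  have hsubL : Finset.univ \ B ⊆ Finset.univ.filter (fun v => (Tr.neighborSet v).ncard = 1) := by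
    intro v hv
    rw [Finset.mem_sdiff] at hv
    rw [Finset.mem_filter]
    refine ⟨Finset.mem_univ v, ?_⟩
    rw [hgood v hv.2]
    exact Set.ncard_singleton _
  have hLcard : n - B.card ≤ ({v | (Tr.neighborSet v).ncard = 1}).ncard := by
    rw [hleafset]
    calc n - B.card = (Finset.univ \ B).card := by
          rw [Finset.card_sdiff_of_subset (Finset.subset_univ B), Finset.card_univ]
      _ ≤ _ := Finset.card_le_card hsubL
  have hBn : B.card ≤ n := Finset.card_le_univ B
  -- final count in ℕ then ℝ
  have hnat : n + 2 ≤ ({v | (Tr.neighborSet v).ncard = 1}).ncard + 3 * D.card := by omega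
  have hcast : (n : ℝ) + 2
      ≤ (({v | (Tr.neighborSet v).ncard = 1}).ncard : ℝ) + 3 * (D.card : ℝ) := by
    exact_mod_cast hnat
  linarith



lemma aux_dominating [Fintype V] [Nonempty V] (H : SimpleGraph V) (k : ℕ)
    (hk : 0 < k) (hdeg : ∀ v : V, k ≤ (H.neighborSet v).ncard) :
    ∃ D : Finset V, D.Nonempty ∧ (∀ v : V, v ∉ D → ∃ w ∈ D, H.Adj v w) ∧
      ((D.card : ℝ) ≤ (Fintype.card V : ℝ) * Real.log (k + 1) / (k + 1)
        + 1 + (Fintype.card V : ℝ) / (k + 1)) := by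
  classical
  set n := Fintype.card V with hn
  set N : ℝ := (n : ℝ) with hNdef
  set K : ℝ := ((k : ℝ) + 1) with hKdef
  set Ncl : V → Finset V := fun v => insert v (H.neighborFinset v) with hNcl
  have hncard : ∀ v : V, (H.neighborSet v).ncard = (H.neighborFinset v).card := by
    intro v
    rw [← Nat.card_coe_set_eq, Nat.card_eq_fintype_card]
    simp [SimpleGraph.neighborFinset_def, Set.toFinset_card]
  have hNclcard : ∀ v : V, k + 1 ≤ (Ncl v).card := by
    intro v
    have h1 : (Ncl v).card = (H.neighborFinset v).card + 1 := by
      rw [hNcl]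
      simp only []
      rw [Finset.card_insert_of_notMem (by simp)]
    rw [h1]
    have := hdeg v
    rw [hncard v] at this
    omega
  have hKn : k + 1 ≤ n := by
    have := hNclcard (Classical.arbitrary V)
    exact this.trans (Finset.card_le_univ _)
  have hnpos : 0 < n := Fintype.card_pos
  -- greedy step
  have hstep : ∀ U : Finset V, ∃ w : V, (k + 1) * U.card ≤ n * ((Ncl w ∩ U)).card := by
    intro U
    by_contra hcon
    push_neg at hcon
    have hswap : ∀ w : V, (Ncl w ∩ U).card = ∑ u ∈ U, if u ∈ Ncl w then 1 else 0 := by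
      intro w
      rw [← Finset.card_filter]
      congr 1
      rw [Finset.filter_mem_eq_inter, Finset.inter_comm]
    have hsym : ∀ u : V, (Finset.univ.filter (fun w => u ∈ Ncl w)) = Ncl u := by
      intro u
      ext w
      simp only [Finset.mem_filter, Finset.mem_univ, true_and, hNcl, Finset.mem_insert,
        SimpleGraph.mem_neighborFinset]
      constructor
      · rintro (rfl | h); · exact Or.inl rfl
        · exact Or.inr h.symm
      · rintro (rfl | h); · exact Or.inl rfl
        · exact Or.inr h.symm
    have hsum1 : ∑ w : V, (Ncl w ∩ U).card = ∑ u ∈ U, (Ncl u).card := by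
      calc ∑ w : V, (Ncl w ∩ U).card = ∑ w : V, ∑ u ∈ U, (if u ∈ Ncl w then 1 else 0) := by
            exact Finset.sum_congr rfl fun w _ => hswap w
        _ = ∑ u ∈ U, ∑ w : V, (if u ∈ Ncl w then 1 else 0) := Finset.sum_comm
        _ = ∑ u ∈ U, (Finset.univ.filter (fun w => u ∈ Ncl w)).card := by
            exact Finset.sum_congr rfl fun u _ => (Finset.card_filter _ _).symm
        _ = ∑ u ∈ U, (Ncl u).card := Finset.sum_congr rfl fun u _ => by rw [hsym u]
    have hlow : (k + 1) * U.card ≤ ∑ u ∈ U, (Ncl u).card := by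
      calc (k + 1) * U.card = ∑ _u ∈ U, (k + 1) := by
            rw [Finset.sum_const, smul_eq_mul, mul_comm]
        _ ≤ ∑ u ∈ U, (Ncl u).card := Finset.sum_le_sum fun u _ => hNclcard u
    have hstrict : ∑ w : V, n * (Ncl w ∩ U).card < ∑ _w : V, (k + 1) * U.card :=
      Finset.sum_lt_sum_of_nonempty Finset.univ_nonempty fun w _ => hcon w
    rw [Finset.sum_const, Finset.card_univ, ← hn, smul_eq_mul, ← Finset.mul_sum, hsum1] at hstrict
    have : n * ((k + 1) * U.card) ≤ n * ∑ u ∈ U, (Ncl u).card :=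
      Nat.mul_le_mul_left n hlow
    omega
  choose pick hpick using hstep
  -- greedy iteration
  set Useq : ℕ → Finset V := fun t => Nat.rec Finset.univ (fun _ Ut => Ut \ Ncl (pick Ut)) t
    with hUseq
  have hU0 : Useq 0 = Finset.univ := rfl
  have hUsucc : ∀ t, Useq (t + 1) = Useq t \ Ncl (pick (Useq t)) := fun t => rfl
  have hKpos : (0 : ℝ) < K := by
    rw [hKdef]; positivity
  have hNpos : (0 : ℝ) < N := by
    rw [hNdef]; exact_mod_cast hnpos
  have hKN : K ≤ N := by
    rw [hKdef, hNdef]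
    exact_mod_cast hKn
  have h1mKN : (0 : ℝ) ≤ 1 - K / N := by
    have : K / N ≤ 1 := (div_le_one hNpos).mpr hKN
    linarith
  -- one-step card bound
  have hrecR : ∀ t : ℕ, ((Useq (t + 1)).card : ℝ) ≤ (1 - K / N) * (Useq t).card := by
    intro t
    have hc : (Useq t ∩ Ncl (pick (Useq t))).card ≤ (Useq t).card :=
      Finset.card_le_card (Finset.inter_subset_left)
    have hcard : (Useq (t + 1)).card = (Useq t).card - (Useq t ∩ Ncl (pick (Useq t))).card := by
      rw [hUsucc t]
      have := Finset.card_sdiff_add_card_inter (Useq t) (Ncl (pick (Useq t)))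
      omega
    have hpick' := hpick (Useq t)
    rw [Finset.inter_comm] at hpick'
    have hR : (n : ℝ) * ((Useq (t+1)).card : ℝ) ≤ (N - K) * (Useq t).card := by
      have hcast : ((Useq (t+1)).card : ℝ)
          = ((Useq t).card : ℝ) - ((Useq t ∩ Ncl (pick (Useq t))).card : ℝ) := by
        rw [hcard]
        push_cast [hc]
        ring
      have h2 : K * ((Useq t).card : ℝ) ≤ (n : ℝ) * ((Useq t ∩ Ncl (pick (Useq t))).card : ℝ) := by
        rw [hKdef]
        exact_mod_cast hpick'
      rw [hcast]
      have : (n : ℝ) = N := rfl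
      rw [this]
      nlinarith
    have hNn : (n : ℝ) = N := rfl
    rw [hNn] at hR
    have heq2 : (1 - K / N) * ((Useq t).card : ℝ) = (N - K) * ((Useq t).card : ℝ) / N := by
      field_simp
    rw [heq2, le_div_iff₀ hNpos]
    nlinarith [hR]
  -- closed form
  have hclosed : ∀ t : ℕ, ((Useq t).card : ℝ) ≤ N * (1 - K / N) ^ t := by
    intro t
    induction t with
    | zero =>
      rw [hU0, pow_zero, mul_one]
      rw [hNdef, hn]
      simp [Finset.card_univ]
    | succ t ih =>
      calc ((Useq (t + 1)).card : ℝ) ≤ (1 - K / N) * (Useq t).card := hrecR t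
        _ ≤ (1 - K / N) * (N * (1 - K / N) ^ t) := by
            exact mul_le_mul_of_nonneg_left ih h1mKN
        _ = N * (1 - K / N) ^ (t + 1) := by ring
  -- choose number of steps
  set t0 : ℕ := ⌈N * Real.log K / K⌉₊ with ht0
  have hlogpos : 0 < Real.log K := by
    apply Real.log_pos
    rw [hKdef]
    have : (1 : ℝ) ≤ (k : ℝ) := by exact_mod_cast hk
    linarith
  have harg : 0 ≤ N * Real.log K / K := by positivity
  have ht0pos : 0 < t0 := by
    rw [ht0, Nat.ceil_pos]
    positivity
  have hu_t0 : ((Useq t0).card : ℝ) ≤ N / K := by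
    have h1 : (1 - K / N) ≤ Real.exp (-(K / N)) := by
      have := Real.add_one_le_exp (-(K / N))
      linarith
    have h2 : ((Useq t0).card : ℝ) ≤ N * Real.exp (-(K / N)) ^ t0 := by
      refine (hclosed t0).trans ?_
      exact mul_le_mul_of_nonneg_left (pow_le_pow_left₀ h1mKN h1 t0) (le_of_lt hNpos)
    have h3 : Real.exp (-(K / N)) ^ t0 = Real.exp ((t0 : ℝ) * (-(K / N))) := by
      rw [Real.exp_nat_mul]
    have h4 : (t0 : ℝ) * (-(K / N)) ≤ -Real.log K := by
      have hle : N * Real.log K / K ≤ (t0 : ℝ) := Nat.le_ceil _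
      rw [div_le_iff₀ hKpos] at hle
      rw [neg_le_neg_iff.symm] at hle
      have : Real.log K ≤ (t0 : ℝ) * K / N := by
        rw [le_div_iff₀ hNpos]
        nlinarith [hle]
      have heq : (t0 : ℝ) * (-(K / N)) = -((t0 : ℝ) * K / N) := by ring
      rw [heq]
      linarith
    have h5 : Real.exp ((t0 : ℝ) * (-(K / N))) ≤ Real.exp (-Real.log K) :=
      Real.exp_le_exp.mpr h4
    have h6 : Real.exp (-Real.log K) = 1 / K := by
      rw [Real.exp_neg, Real.exp_log hKpos]
      ring
    calc ((Useq t0).card : ℝ) ≤ N * Real.exp (-(K / N)) ^ t0 := h2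
      _ = N * Real.exp ((t0 : ℝ) * (-(K / N))) := by rw [h3]
      _ ≤ N * Real.exp (-Real.log K) := mul_le_mul_of_nonneg_left h5 (le_of_lt hNpos)
      _ = N / K := by rw [h6]; ring
  -- the dominating set
  set D : Finset V := (Finset.range t0).image (fun t => pick (Useq t)) ∪ Useq t0 with hD
  have hDne : D.Nonempty := by
    refine Finset.Nonempty.mono Finset.subset_union_left ?_
    exact Finset.Nonempty.image (by rw [Finset.nonempty_range_iff]; omega) _
  have hcover : ∀ (v : V) (t : ℕ), v ∈ Useq t ∨ ∃ s < t, v ∈ Ncl (pick (Useq s)) := by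
    intro v t
    induction t with
    | zero => left; rw [hU0]; exact Finset.mem_univ v
    | succ t ih =>
      rcases ih with hv | ⟨s, hs, hv⟩
      · by_cases hvn : v ∈ Ncl (pick (Useq t))
        · exact Or.inr ⟨t, Nat.lt_succ_self t, hvn⟩
        · left
          rw [hUsucc t]
          exact Finset.mem_sdiff.mpr ⟨hv, hvn⟩
      · exact Or.inr ⟨s, hs.trans (Nat.lt_succ_self t), hv⟩
  have hdom : ∀ v : V, v ∉ D → ∃ w ∈ D, H.Adj v w := by
    intro v hv
    have hv1 : v ∉ Useq t0 := fun h => hv (Finset.mem_union_right _ h)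
    rcases hcover v t0 with h | ⟨s, hs, hvs⟩
    · exact absurd h hv1
    · rw [hNcl] at hvs
      simp only [Finset.mem_insert, SimpleGraph.mem_neighborFinset] at hvs
      rcases hvs with rfl | hadj
      · exfalso
        apply hv
        apply Finset.mem_union_left
        exact Finset.mem_image_of_mem _ (Finset.mem_range.mpr hs)
      · refine ⟨pick (Useq s), ?_, hadj.symm⟩
        apply Finset.mem_union_left
        exact Finset.mem_image_of_mem _ (Finset.mem_range.mpr hs)
  refine ⟨D, hDne, hdom, ?_⟩
  have hcard1 : D.card ≤ t0 + (Useq t0).card := by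
    calc D.card ≤ ((Finset.range t0).image (fun t => pick (Useq t))).card + (Useq t0).card :=
          Finset.card_union_le _ _
      _ ≤ t0 + (Useq t0).card := by
          gcongr
          exact (Finset.card_image_le).trans (by rw [Finset.card_range])
  have ht0R : (t0 : ℝ) ≤ N * Real.log K / K + 1 := le_of_lt (Nat.ceil_lt_add_one harg)
  have : (D.card : ℝ) ≤ (t0 : ℝ) + ((Useq t0).card : ℝ) := by exact_mod_cast hcard1
  rw [hNdef, hKdef] at ht0R hu_t0
  push_cast at this ht0R hu_t0 ⊢
  rw [hn] at *
  linarith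

end aux

/-- Let `G` be a finite connected simple graph with minimum degree at least
`k+1` for an integer `k ≥ 186`, `T` a spanning tree of `G`, and `H` a spanning subgraph of
`G` containing `T` in which every vertex has degree at least `min(deg_G(v), k)`. Then
`leaf(H) ≥ (1 − 30(1 + ln(k+1))/(k+1)) · leaf(G)`. -/
theorem maxLeaf_sparsifier {V : Type*} [Fintype V]
    (G T H : SimpleGraph V) (k : ℕ) (hk : 186 ≤ k)
    (hG : G.Connected) (hmin : ∀ v : V, k + 1 ≤ (G.neighborSet v).ncard)
    (hTG : T ≤ G) (htree : T.IsTree) (hTH : T ≤ H) (hHG : H ≤ G)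
    (hdeg : ∀ v : V, min ((G.neighborSet v).ncard) k ≤ (H.neighborSet v).ncard) :
    (1 - 30 * ((1 + Real.log ((k : ℝ) + 1)) / ((k : ℝ) + 1))) * (maxLeaf G : ℝ)
      ≤ (maxLeaf H : ℝ) := by
  classical
  have hV : Nonempty V := hG.nonempty
  have HConn : H.Connected := htree.isConnected.mono hTH
  have hk0 : 0 < k := by omega
  have hdegH : ∀ v : V, k ≤ (H.neighborSet v).ncard := by
    intro v
    have h1 := hdeg v
    have h2 : k ≤ (G.neighborSet v).ncard := le_trans (Nat.le_succ k) (hmin v)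
    rwa [min_eq_right h2] at h1
  obtain ⟨D, hDne, hdom, hDcard⟩ := aux_dominating H k hk0 hdegH
  obtain ⟨Tr, hTrH, hTrTree, hTrleaf⟩ := aux_tree_leaves H HConn D hDne hdom
  set n := Fintype.card V with hn
  -- n ≥ k + 2
  have hkn : k + 2 ≤ n := by
    have hv := Classical.arbitrary V
    have h1 : k + 1 ≤ (G.neighborSet hv).ncard := hmin hv
    have h2 : (insert hv (G.neighborSet hv)).ncard = (G.neighborSet hv).ncard + 1 := by
      exact Set.ncard_insert_of_notMem (by simp)
    have h3 : (insert hv (G.neighborSet hv)).ncard ≤ n := by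
      rw [hn, ← Nat.card_eq_fintype_card, ← Set.ncard_univ]
      exact Set.ncard_le_ncard (Set.subset_univ _) Set.finite_univ
    omega
  -- bounds on maxLeaf values
  have hboundH : ∀ c ∈ {c | ∃ T' : SimpleGraph V, T' ≤ H ∧ T'.IsTree ∧
      {v | (T'.neighborSet v).ncard = 1}.ncard = c}, c ≤ n := by
    rintro c ⟨T', _, _, rfl⟩
    rw [hn, ← Nat.card_eq_fintype_card, ← Set.ncard_univ]
    exact Set.ncard_le_ncard (Set.subset_univ _) Set.finite_univ
  have hboundG : ∀ c ∈ {c | ∃ T' : SimpleGraph V, T' ≤ G ∧ T'.IsTree ∧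
      {v | (T'.neighborSet v).ncard = 1}.ncard = c}, c ≤ n := by
    rintro c ⟨T', _, _, rfl⟩
    rw [hn, ← Nat.card_eq_fintype_card, ← Set.ncard_univ]
    exact Set.ncard_le_ncard (Set.subset_univ _) Set.finite_univ
  have hMLG : maxLeaf G ≤ n := by
    apply csSup_le
    · exact ⟨_, T, hTG, htree, rfl⟩
    · exact hboundG
  have hMLH : {v | (Tr.neighborSet v).ncard = 1}.ncard ≤ maxLeaf H := by
    apply le_csSup
    · exact ⟨n, hboundH⟩
    · exact ⟨Tr, hTrH, hTrTree, rfl⟩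
  -- real arithmetic
  set K : ℝ := (k : ℝ) + 1 with hK
  set L : ℝ := Real.log K with hL
  set N : ℝ := (n : ℝ) with hN
  have hKpos : (0 : ℝ) < K := by rw [hK]; positivity
  have hKN : K ≤ N := by
    rw [hK, hN]
    have : (k : ℝ) + 1 ≤ (n : ℝ) := by exact_mod_cast (by omega : k + 1 ≤ n)
    linarith
  have hNpos : (0 : ℝ) < N := lt_of_lt_of_le hKpos hKN
  have hLnonneg : 0 ≤ L := by
    rw [hL]
    apply Real.log_nonneg
    rw [hK]
    have : (0 : ℝ) ≤ (k : ℝ) := Nat.cast_nonneg k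
    linarith
  have ha : 1 ≤ N / K := (one_le_div hKpos).mpr hKN
  have hb : 0 ≤ N * L / K := by positivity
  have hMLG' : (maxLeaf G : ℝ) ≤ N := by rw [hN]; exact_mod_cast hMLG
  have hMLH' : (({v | (Tr.neighborSet v).ncard = 1}.ncard : ℝ)) ≤ (maxLeaf H : ℝ) := by
    exact_mod_cast hMLH
  have hDcard' : (D.card : ℝ) ≤ N * L / K + 1 + N / K := hDcard
  have hTrleaf' : N - 3 * (D.card : ℝ) + 2
      ≤ (({v | (Tr.neighborSet v).ncard = 1}.ncard : ℝ)) := hTrleaf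
  rcases le_or_gt (1 - 30 * ((1 + L) / K)) 0 with hsign | hsign
  · have h1 : (1 - 30 * ((1 + Real.log ((k : ℝ) + 1)) / ((k : ℝ) + 1))) * (maxLeaf G : ℝ) ≤ 0 :=
      mul_nonpos_of_nonpos_of_nonneg (by rw [← hK, ← hL] at *; exact hsign) (Nat.cast_nonneg _)
    exact h1.trans (Nat.cast_nonneg _)
  · have hKey : (1 - 30 * ((1 + L) / K)) * N ≤ N - 3 * ((D.card : ℝ)) + 2 := by
      have e1 : (1 - 30 * ((1 + L) / K)) * N = N - 30 * (N / K) - 30 * (N * L / K) := by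
        field_simp
        ring
      rw [e1]
      linarith
    calc (1 - 30 * ((1 + Real.log ((k : ℝ) + 1)) / ((k : ℝ) + 1))) * (maxLeaf G : ℝ)
        = (1 - 30 * ((1 + L) / K)) * (maxLeaf G : ℝ) := by rw [← hK, ← hL]
      _ ≤ (1 - 30 * ((1 + L) / K)) * N := mul_le_mul_of_nonneg_left hMLG' (le_of_lt hsign)
      _ ≤ N - 3 * ((D.card : ℝ)) + 2 := hKey
      _ ≤ (({v | (Tr.neighborSet v).ncard = 1}.ncard : ℝ)) := hTrleaf'
      _ ≤ (maxLeaf H : ℝ) := hMLH'
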